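/- Suppose complex numbers m_0, ..., m_{2d-1} are Taylor coefficients at infinity of a rational function R = P/Q with deg P < deg Q = r ≤ d and gcd(P,Q)=1 (i.e. R(z) - Σ_{k=0}^{2d-1} m_k z^{-(k+1)} = O(z^{-2d-1})). Then the rank of the d × (d+1) Hankel matrix M̃_d = (m_{i+j})_{0≤i≤d-1, 0≤j≤d} is exactly r. -/

import Mathlib

open Polynomial Filter Topology Finset

noncomputable def gser (r : ℕ) (P Q : ℂ[X]) : PowerSeries ℂ :=
  (reflect (r-1) P : PowerSeries ℂ) * ((reflect r Q : PowerSeries ℂ))⁻¹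

noncomputable def gcoef (r : ℕ) (P Q : ℂ[X]) (k : ℕ) : ℂ :=
  PowerSeries.coeff k (gser r P Q)

section ctx
variable {r : ℕ} {P Q : ℂ[X]} (hQ : Q ≠ 0) (hQdeg : Q.natDegree = r)
  (hdeg : P.degree < Q.degree)
include hQ hQdeg hdeg

omit hdeg in
lemma hconst : PowerSeries.constantCoeff ((reflect r Q : ℂ[X]) : PowerSeries ℂ) ≠ 0 := by
  rw [Polynomial.constantCoeff_coe, coeff_reflect, revAt_le (Nat.zero_le r), Nat.sub_zero,
    ← hQdeg]
  exact mt leadingCoeff_eq_zero.mp hQ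

omit hdeg in
lemma hQG : ((reflect r Q : ℂ[X]) : PowerSeries ℂ) * gser r P Q
    = ((reflect (r-1) P : ℂ[X]) : PowerSeries ℂ) := by
  rw [gser, ← mul_assoc, mul_comm ((reflect r Q : ℂ[X]) : PowerSeries ℂ), mul_assoc,
    PowerSeries.mul_inv_cancel _ (hconst hQ hQdeg), mul_one]

lemma hPcoeff0 (j : ℕ) (hj : r ≤ j) : P.coeff j = 0 := by
  refine coeff_eq_zero_of_degree_lt (lt_of_lt_of_le hdeg ?_)
  rw [degree_eq_natDegree hQ, hQdeg]
  exact_mod_cast Nat.cast_le.mpr hj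

lemma hrec (k : ℕ) :
    ∑ t ∈ range (r+1), Q.coeff t * gcoef r P Q (k+t) = 0 := by
  have h1 := congrArg (PowerSeries.coeff (k+r)) (hQG (P := P) hQ hQdeg)
  rw [PowerSeries.coeff_mul, Finset.Nat.sum_antidiagonal_eq_sum_range_succ_mk] at h1
  have h2 : (PowerSeries.coeff (k+r)) ((reflect (r-1) P : ℂ[X]) : PowerSeries ℂ) = 0 := by
    rw [Polynomial.coeff_coe, coeff_reflect]
    rcases Nat.eq_zero_or_pos r with hr0 | hr
    · subst hr0
      have hP0 : P = 0 := by
        rw [degree_eq_natDegree hQ, hQdeg] at hdeg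
        exact degree_eq_bot.mp (by exact_mod_cast Nat.WithBot.lt_zero_iff.mp (by exact_mod_cast hdeg))
      simp [hP0]
    · rw [revAt_eq_self_of_lt (by omega)]
      exact hPcoeff0 hQ hQdeg hdeg _ (by omega)
  rw [h2] at h1
  have h3 : ∑ i ∈ range (k+r+1),
      (PowerSeries.coeff i) ((reflect r Q : ℂ[X]) : PowerSeries ℂ)
        * (PowerSeries.coeff (k+r-i)) (gser r P Q)
      = ∑ i ∈ range (r+1),
      (PowerSeries.coeff i) ((reflect r Q : ℂ[X]) : PowerSeries ℂ)
        * (PowerSeries.coeff (k+r-i)) (gser r P Q) := by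
    refine (Finset.sum_subset (Finset.range_subset_range.mpr (by omega)) fun i _ hi => ?_).symm
    rw [Finset.mem_range, not_lt] at hi
    rw [Polynomial.coeff_coe, coeff_reflect, revAt_eq_self_of_lt (by omega),
      coeff_eq_zero_of_natDegree_lt (by omega), zero_mul]
  rw [h3] at h1
  rw [← h1]
  rw [← Finset.sum_range_reflect (fun i =>
    (PowerSeries.coeff i) ((reflect r Q : ℂ[X]) : PowerSeries ℂ)
      * (PowerSeries.coeff (k+r-i)) (gser r P Q)) (r+1)]
  refine Finset.sum_congr rfl fun t ht => ?_
  rw [Finset.mem_range] at ht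
  rw [Polynomial.coeff_coe, coeff_reflect, revAt_le (by omega), gcoef]
  have e1 : r - (r + 1 - 1 - t) = t := by omega
  have e2 : k + r - (r + 1 - 1 - t) = k + t := by omega
  rw [e1, e2]

end ctx

section ctx2
variable {r : ℕ} {P Q : ℂ[X]} (hQ : Q ≠ 0) (hQdeg : Q.natDegree = r)
  (hdeg : P.degree < Q.degree)

private lemma reflect_reflect'2 (N : ℕ) (p : ℂ[X]) : reflect N (reflect N p) = p := by
  ext i; simp [coeff_reflect]

private lemma natDegree_reflect_le'2 {N : ℕ} {p : ℂ[X]} (hp : p.natDegree ≤ N) :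
    (reflect N p).natDegree ≤ N := by
  refine natDegree_le_iff_coeff_eq_zero.2 fun i hi => ?_
  rw [coeff_reflect, revAt_eq_self_of_lt hi]
  exact coeff_eq_zero_of_natDegree_lt (lt_of_le_of_lt hp hi)

private lemma eval_reflect'2 {N : ℕ} {p : ℂ[X]} (hp : p.natDegree ≤ N) (z : ℂ) (hz : z ≠ 0) :
    p.eval z = z ^ N * (reflect N p).eval z⁻¹ := by
  have h1 : (reflect N p).natDegree < N + 1 := Nat.lt_succ_of_le (natDegree_reflect_le'2 hp)
  have h2 : p.natDegree < N + 1 := Nat.lt_succ_of_le hp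
  rw [eval_eq_sum_range' h1, eval_eq_sum_range' h2, Finset.mul_sum]
  rw [← Finset.sum_range_reflect (fun i => z ^ N * ((reflect N p).coeff i * z⁻¹ ^ i)) (N+1)]
  refine Finset.sum_congr rfl fun i hi => ?_
  rw [Finset.mem_range] at hi
  have hiN : i ≤ N := Nat.lt_succ_iff.mp hi
  simp only [coeff_reflect, revAt_le (by omega : N + 1 - 1 - i ≤ N)]
  have : N - (N + 1 - 1 - i) = i := by omega
  rw [this]
  rw [mul_comm (z ^ N), mul_assoc]
  congr 1
  rw [eq_comm, inv_pow, inv_mul_eq_iff_eq_mul₀ (pow_ne_zero _ hz), ← pow_add]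
  congr 1; omega

include hQ hQdeg hdeg in
lemma hAg (d : ℕ) (hd : 0 < d) :
    Tendsto (fun z : ℂ => z ^ (2*d) *
      (P.eval z / Q.eval z - ∑ k ∈ range (2*d), gcoef r P Q k * (z⁻¹) ^ (k+1)))
      (Bornology.cobounded ℂ) (𝓝 0) := by
  rcases Nat.eq_zero_or_pos r with hr0 | hr
  · subst hr0
    have hP0 : P = 0 := by
      rw [degree_eq_natDegree hQ, hQdeg] at hdeg
      exact degree_eq_bot.mp (by exact_mod_cast Nat.WithBot.lt_zero_iff.mp (by exact_mod_cast hdeg))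
    have hg0 : ∀ k, gcoef 0 P Q k = 0 := by
      intro k; rw [gcoef, gser, hP0]; simp
    have : ∀ z : ℂ, z ^ (2*d) *
        (P.eval z / Q.eval z - ∑ k ∈ range (2*d), gcoef 0 P Q k * (z⁻¹) ^ (k+1)) = 0 := by
      intro z
      have hs : ∑ k ∈ range (2*d), gcoef 0 P Q k * (z⁻¹) ^ (k+1) = 0 :=
        Finset.sum_eq_zero fun k _ => by rw [hg0 k, zero_mul]
      rw [hs, hP0]
      simp
    exact Tendsto.congr (fun z => (this z).symm) tendsto_const_nhds
  -- main case r ≥ 1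
  set Pt := reflect (r-1) P with hPtdef
  set Qt := reflect r Q with hQtdef
  set G := gser r P Q with hGdef
  set T := PowerSeries.trunc (2*d) G with hTdef
  have hTc : ∀ j, j < 2*d → T.coeff j = gcoef r P Q j := by
    intro j hj
    rw [hTdef, PowerSeries.coeff_trunc, if_pos hj, gcoef]
  have hTdeg : T.natDegree < 2*d := by
    have h2d : 2*d = (2*d-1)+1 := by omega
    rw [hTdef, h2d]
    exact PowerSeries.natDegree_trunc_lt G _
  have hQGmul := hQG (P := P) hQ hQdeg
  have hCdvd : (X : ℂ[X]) ^ (2*d) ∣ (Pt - Qt * T) := by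
    rw [X_pow_dvd_iff]
    intro n hn
    rw [coeff_sub, Polynomial.coeff_mul]
    have h1 := congrArg (PowerSeries.coeff n) hQGmul
    rw [PowerSeries.coeff_mul] at h1
    have h2 : ∑ p ∈ Finset.HasAntidiagonal.antidiagonal n, Qt.coeff p.1 * T.coeff p.2
        = ∑ p ∈ Finset.HasAntidiagonal.antidiagonal n,
          (PowerSeries.coeff p.1) ((Qt : ℂ[X]) : PowerSeries ℂ)
            * (PowerSeries.coeff p.2) G := by
      refine Finset.sum_congr rfl fun p hp => ?_
      rw [Finset.HasAntidiagonal.mem_antidiagonal] at hp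
      rw [Polynomial.coeff_coe, hTc p.2 (by omega), gcoef]
    rw [h2, h1, Polynomial.coeff_coe, sub_self]
  obtain ⟨H, hH⟩ := hCdvd
  have hPt : Pt = Qt * T + X ^ (2*d) * H := by linear_combination hH
  have hQt0 : Qt.eval 0 ≠ 0 := by
    rw [← coeff_zero_eq_eval_zero, hQtdef, coeff_reflect, revAt_le (Nat.zero_le r),
      Nat.sub_zero, ← hQdeg]
    exact mt leadingCoeff_eq_zero.mp hQ
  have hlim : Tendsto (fun w : ℂ => w * H.eval w / Qt.eval w) (𝓝 0) (𝓝 0) := by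
    have hnum : Tendsto (fun w : ℂ => w * H.eval w) (𝓝 0) (𝓝 0) := by
      have := (continuous_id.mul (Polynomial.continuous H)).tendsto 0
      simpa [Pi.mul_def] using this
    have hden : Tendsto (fun w : ℂ => Qt.eval w) (𝓝 0) (𝓝 (Qt.eval 0)) :=
      (Polynomial.continuous Qt).tendsto 0
    have := hnum.div hden hQt0
    simpa [Pi.div_def] using this
  have hφ : Tendsto (fun z : ℂ => z⁻¹ * H.eval z⁻¹ / Qt.eval z⁻¹)
      (Bornology.cobounded ℂ) (𝓝 0) := hlim.comp tendsto_inv₀_cobounded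
  refine Tendsto.congr' ?_ hφ
  have hne : ∀ᶠ z : ℂ in Bornology.cobounded ℂ, Qt.eval z⁻¹ ≠ 0 := by
    have : Tendsto (fun z : ℂ => Qt.eval z⁻¹) (Bornology.cobounded ℂ) (𝓝 (Qt.eval 0)) :=
      ((Polynomial.continuous Qt).tendsto 0).comp tendsto_inv₀_cobounded
    exact this.eventually_ne hQt0
  filter_upwards [eventually_cobounded_le_norm (1:ℝ), hne] with z hz1 hb
  have hz0 : z ≠ 0 := by
    intro h0; rw [h0] at hz1; simp at hz1; linarith
  have hPle : P.natDegree ≤ r - 1 := by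
    by_cases hP0 : P = 0
    · simp [hP0]
    · have := natDegree_lt_natDegree hP0 hdeg
      omega
  have hPz : P.eval z = z ^ (r-1) * Pt.eval z⁻¹ := eval_reflect'2 hPle z hz0
  have hQz : Q.eval z = z ^ r * Qt.eval z⁻¹ := eval_reflect'2 (le_of_eq hQdeg) z hz0
  have hsum : ∑ k ∈ range (2*d), gcoef r P Q k * (z⁻¹) ^ (k+1) = z⁻¹ * T.eval z⁻¹ := by
    rw [eval_eq_sum_range' hTdeg, Finset.mul_sum]
    refine Finset.sum_congr rfl fun k hk => ?_
    rw [Finset.mem_range] at hk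
    rw [hTc k hk, pow_succ']
    ring
  have heval : Pt.eval z⁻¹ = Qt.eval z⁻¹ * T.eval z⁻¹ + (z⁻¹) ^ (2*d) * H.eval z⁻¹ := by
    have := congrArg (eval z⁻¹) hPt
    simpa using this
  rw [eq_comm]
  rw [hsum, hPz, hQz, heval]
  have hw0 : z⁻¹ ≠ 0 := inv_ne_zero hz0
  have e1 : z ^ r * Qt.eval z⁻¹ = z ^ (r-1) * (z * Qt.eval z⁻¹) := by
    rw [← mul_assoc, ← pow_succ]
    congr 2
    omega
  rw [e1, mul_div_mul_left _ _ (pow_ne_zero (r-1) hz0)]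
  have hz' : z = (z⁻¹)⁻¹ := (inv_inv z).symm
  rw [hz']
  generalize z⁻¹ = w at hb hw0 ⊢
  field_simp
  ring_nf
  rw [← mul_pow, mul_inv_cancel₀ hw0, one_pow, one_mul]

end ctx2

section ctx3
variable {r : ℕ} {P Q : ℂ[X]} (hQ : Q ≠ 0) (hQdeg : Q.natDegree = r)
  (hdeg : P.degree < Q.degree) (hcop : IsCoprime P Q)

include hQ hQdeg hdeg hcop in
lemma kernel_trivial (hr : 0 < r) (v : ℕ → ℂ) (hv0 : ∀ j, r ≤ j → v j = 0)
    (hker : ∀ i, i < r → ∑ j ∈ range r, v j * gcoef r P Q (i+j) = 0) :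
    ∀ j, v j = 0 := by
  set g : ℕ → ℂ := gcoef r P Q with hg
  set V : ℂ[X] := ∑ j ∈ range r, C (v j) * X ^ j with hV
  have hVcoeff : ∀ i, V.coeff i = if i < r then v i else 0 := by
    intro i
    rw [hV, finset_sum_coeff]
    by_cases hi : i < r
    · rw [if_pos hi, Finset.sum_eq_single_of_mem i (Finset.mem_range.2 hi)]
      · simp
      · intro b _ hb
        simp [coeff_C_mul, coeff_X_pow, Ne.symm hb]
    · rw [if_neg hi, Finset.sum_eq_zero]
      intro b hb
      rw [Finset.mem_range] at hb
      rw [coeff_C_mul, coeff_X_pow, if_neg (by omega), mul_zero]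
  have hVdeg' : V.natDegree ≤ r - 1 := by
    refine natDegree_le_iff_coeff_eq_zero.2 fun i hi => ?_
    rw [hVcoeff, if_neg (by omega)]
  have hVdeg : V.natDegree ≤ r := by omega
  have ht : ∀ i, ∑ j ∈ range r, v j * g (i+j) = 0 := by
    intro i
    induction i using Nat.strong_induction_on with
    | _ i ih =>
      rcases Nat.lt_or_ge i r with hir | hir
      · exact hker i hir
      · have hbig : ∑ t ∈ range (r+1), Q.coeff t * (∑ j ∈ range r, v j * g ((i-r+t)+j)) = 0 := by
          have hswap : ∀ t ∈ range (r+1), Q.coeff t * (∑ j ∈ range r, v j * g ((i-r+t)+j))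
              = ∑ j ∈ range r, v j * (Q.coeff t * g ((i-r+j)+t)) := by
            intro t _
            rw [Finset.mul_sum]
            refine Finset.sum_congr rfl fun j _ => ?_
            have e : (i-r+t)+j = (i-r+j)+t := by omega
            rw [e]; ring
          rw [Finset.sum_congr rfl hswap, Finset.sum_comm]
          refine Finset.sum_eq_zero fun j _ => ?_
          rw [← Finset.mul_sum, hrec hQ hQdeg hdeg (i-r+j), mul_zero]
        rw [Finset.sum_range_succ] at hbig
        have hz : ∑ t ∈ range r, Q.coeff t * (∑ j ∈ range r, v j * g ((i-r+t)+j)) = 0 :=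
          Finset.sum_eq_zero fun t htr => by
            rw [ih (i-r+t) (by rw [Finset.mem_range] at htr; omega), mul_zero]
        rw [hz, zero_add] at hbig
        have hqr : Q.coeff r ≠ 0 := by
          rw [← hQdeg]; exact mt leadingCoeff_eq_zero.mp hQ
        have he : i - r + r = i := by omega
        rw [he] at hbig
        exact (mul_eq_zero.mp hbig).resolve_left hqr
  -- power series identity
  set Pt := reflect (r-1) P with hPtdef
  set Qt := reflect r Q with hQtdef
  set G := gser r P Q with hGdef
  set Vt : ℂ[X] := reflect r V with hVtdef
  set Wt : ℂ[X] := PowerSeries.trunc r (G * ((Vt : ℂ[X]) : PowerSeries ℂ)) with hWt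
  have hVtc : ∀ i, i ≤ r → Vt.coeff i = V.coeff (r - i) := by
    intro i hi
    rw [hVtdef, coeff_reflect, revAt_le hi]
  have hGV : G * ((Vt : ℂ[X]) : PowerSeries ℂ) = ((Wt : ℂ[X]) : PowerSeries ℂ) := by
    ext n
    rw [Polynomial.coeff_coe, hWt, PowerSeries.coeff_trunc]
    by_cases hn : n < r
    · rw [if_pos hn]
    · rw [if_neg hn]
      rw [not_lt] at hn
      rw [mul_comm, PowerSeries.coeff_mul, Finset.Nat.sum_antidiagonal_eq_sum_range_succ_mk]
      have hstep1 : ∑ i ∈ range (r+1),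
          (PowerSeries.coeff i) ((Vt : ℂ[X]) : PowerSeries ℂ) * (PowerSeries.coeff (n-i)) G
          = ∑ i ∈ range (n+1),
          (PowerSeries.coeff i) ((Vt : ℂ[X]) : PowerSeries ℂ)
            * (PowerSeries.coeff (n-i)) G := by
        refine Finset.sum_subset (Finset.range_subset_range.mpr (by omega)) fun i _ hi => ?_
        rw [Finset.mem_range, not_lt] at hi
        rw [Polynomial.coeff_coe, hVtdef, coeff_reflect, revAt_eq_self_of_lt (by omega),
          coeff_eq_zero_of_natDegree_lt (by omega), zero_mul]
      rw [← hstep1]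
      rw [Finset.sum_range_succ']
      have hF0 : (PowerSeries.coeff 0) ((Vt : ℂ[X]) : PowerSeries ℂ)
          * (PowerSeries.coeff (n-0)) G = 0 := by
        rw [Polynomial.coeff_coe, hVtc 0 (by omega), Nat.sub_zero, hVcoeff,
          if_neg (by omega), zero_mul]
      rw [hF0, add_zero]
      have hterm : ∀ i ∈ range r,
          (PowerSeries.coeff (i+1)) ((Vt : ℂ[X]) : PowerSeries ℂ)
            * (PowerSeries.coeff (n-(i+1))) G
          = v (r-1-i) * g (n-r+(r-1-i)) := by
        intro i hi
        rw [Finset.mem_range] at hi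
        rw [Polynomial.coeff_coe, hVtc (i+1) (by omega), hVcoeff, if_pos (by omega)]
        have e1 : r - (i+1) = r-1-i := by omega
        have e2 : n - (i+1) = n-r+(r-1-i) := by omega
        rw [e1, e2]
        rfl
      rw [Finset.sum_congr rfl hterm]
      rw [Finset.sum_range_reflect (fun j => v j * g (n-r+j)) r]
      exact ht (n-r)
  have hQGmul := hQG (P := P) hQ hQdeg
  have h5 : ((Pt * Vt : ℂ[X]) : PowerSeries ℂ) = ((Qt * Wt : ℂ[X]) : PowerSeries ℂ) := by
    rw [Polynomial.coe_mul, Polynomial.coe_mul, ← hQGmul, mul_assoc, hGV]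
  have hPV : Pt * Vt = Qt * Wt := Polynomial.coe_inj.mp h5
  have hPle : P.natDegree ≤ r - 1 := by
    by_cases hP0 : P = 0
    · simp [hP0]
    · have := natDegree_lt_natDegree hP0 hdeg
      rw [hQdeg] at this
      omega
  have hWdeg : Wt.natDegree ≤ r - 1 := by
    have h' : r = (r-1)+1 := by omega
    have : Wt.natDegree < r := by
      rw [hWt, h']
      exact PowerSeries.natDegree_trunc_lt _ _
    omega
  set W : ℂ[X] := reflect (r-1) Wt with hW
  have hrefl1 : Pt * Vt = reflect ((r-1) + r) (P * V) := (reflect_mul P V hPle hVdeg).symm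
  have hrefl2 : Qt * Wt = reflect ((r-1) + r) (Q * W) := by
    have hWW : reflect (r-1) W = Wt := reflect_reflect'2 _ _
    have hadd : r + (r-1) = (r-1) + r := by omega
    rw [← hWW, ← hadd]
    exact (reflect_mul Q W (le_of_eq hQdeg) (natDegree_reflect_le'2 hWdeg)).symm
  rw [hrefl1, hrefl2] at hPV
  have hPV' : P * V = Q * W := by
    have := congrArg (reflect ((r-1)+r)) hPV
    rwa [reflect_reflect'2, reflect_reflect'2] at this
  have hdvd : Q ∣ V := by
    refine (hcop.symm).dvd_of_dvd_mul_left ⟨W, hPV'.symm ▸ ?_⟩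
    exact (mul_comm Q W) ▸ rfl
  have hV0 : V = 0 := by
    refine eq_zero_of_dvd_of_degree_lt hdvd ?_
    rw [degree_eq_natDegree hQ, hQdeg]
    calc V.degree ≤ (V.natDegree : WithBot ℕ) := degree_le_natDegree
      _ ≤ ((r-1 : ℕ) : WithBot ℕ) := by exact_mod_cast hVdeg'
      _ < (r : WithBot ℕ) := by exact_mod_cast (by omega : r - 1 < r)
  intro j
  rcases Nat.lt_or_ge j r with hj | hj
  · have := hVcoeff j
    rw [if_pos hj, hV0] at this
    simpa using this.symm
  · exact hv0 j hj
end ctx3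

private lemma coeffs_eq_zero_of_tendsto :
    ∀ (N : ℕ) (c : ℕ → ℂ),
      Tendsto (fun z : ℂ => ∑ k ∈ range N, c k * z ^ (N - 1 - k))
        (Bornology.cobounded ℂ) (𝓝 0) → ∀ k < N, c k = 0 := by
  intro N
  induction N with
  | zero => intro c h k hk; omega
  | succ N ih =>
    intro c h k hk
    have h' : Tendsto (fun z : ℂ => ∑ k ∈ range (N+1), c k * z ^ (N - k))
        (Bornology.cobounded ℂ) (𝓝 0) := by
      simpa using h
    have h0 : c 0 = 0 := by
      have hcont : Continuous fun w : ℂ => ∑ k ∈ range (N+1), c k * w ^ k := by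
        exact continuous_finset_sum _ fun k _ => continuous_const.mul (continuous_pow k)
      have hval : (∑ k ∈ range (N+1), c k * (0:ℂ) ^ k) = c 0 := by
        rw [Finset.sum_eq_single_of_mem 0 (Finset.mem_range.2 (by omega))]
        · simp
        · intro b _ hb
          rw [zero_pow hb, mul_zero]
      have lim1 : Tendsto (fun z : ℂ => ∑ k ∈ range (N+1), c k * (z⁻¹) ^ k)
          (Bornology.cobounded ℂ) (𝓝 (c 0)) := by
        have := (hcont.tendsto 0).comp (tendsto_inv₀_cobounded (α := ℂ))
        rw [hval] at this
        exact this
      have heq : ∀ᶠ z : ℂ in Bornology.cobounded ℂ,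
          (∑ k ∈ range (N+1), c k * z ^ (N - k)) * (z⁻¹) ^ N
            = ∑ k ∈ range (N+1), c k * (z⁻¹) ^ k := by
        filter_upwards [eventually_cobounded_le_norm (1:ℝ)] with z hz
        have hz0 : z ≠ 0 := by
          intro h0; rw [h0] at hz; simp at hz; linarith
        rw [Finset.sum_mul]
        refine Finset.sum_congr rfl fun i hi => ?_
        rw [Finset.mem_range] at hi
        rw [mul_assoc]
        congr 1
        have hNi : z ^ (N - i) * z ^ i = z ^ N := by rw [← pow_add]; congr 1; omega
        rw [inv_pow, inv_pow, ← hNi, mul_inv, ← mul_assoc, mul_inv_cancel₀ (pow_ne_zero _ hz0), one_mul]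
      have hbdd : IsBoundedUnder (· ≤ ·) (Bornology.cobounded ℂ)
          (fun z : ℂ => ‖(z⁻¹) ^ N‖) := by
        refine isBoundedUnder_of_eventually_le (a := 1) ?_
        filter_upwards [eventually_cobounded_le_norm (1:ℝ)] with z hz
        rw [norm_pow, norm_inv]
        have : (1:ℝ) ≤ ‖z‖ := hz
        have h1 : ‖z‖⁻¹ ≤ 1 := by
          rw [inv_le_one_iff₀]; right; exact this
        calc ‖z‖⁻¹ ^ N ≤ 1 ^ N := pow_le_pow_left₀ (by positivity) h1 N
          _ = 1 := one_pow N
      have lim2 : Tendsto (fun z : ℂ => (∑ k ∈ range (N+1), c k * z ^ (N - k)) * (z⁻¹) ^ N)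
          (Bornology.cobounded ℂ) (𝓝 0) := h'.zero_mul_isBoundedUnder_le hbdd
      have := tendsto_nhds_unique (lim2.congr' heq) lim1
      exact this.symm
    rcases Nat.eq_zero_or_pos k with rfl | hkpos
    · exact h0
    · have htail : Tendsto (fun z : ℂ => ∑ k ∈ range N, c (k+1) * z ^ (N - 1 - k))
          (Bornology.cobounded ℂ) (𝓝 0) := by
        refine h'.congr fun z => ?_
        rw [Finset.sum_range_succ']
        rw [h0, zero_mul, add_zero]
        refine Finset.sum_congr rfl fun i hi => ?_
        have he : N - (i + 1) = N - 1 - i := by omega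
        rw [he]
      have := ih (fun k => c (k+1)) htail (k - 1) (by omega)
      simpa [Nat.sub_add_cancel hkpos] using this

theorem hankel_rank_eq_of_rational (d r : ℕ) (hrd : r ≤ d) (P Q : Polynomial ℂ)
    (hQ : Q ≠ 0) (hQdeg : Q.natDegree = r) (hdeg : P.degree < Q.degree)
    (hcop : IsCoprime P Q) (m : ℕ → ℂ)
    (htaylor : Tendsto
      (fun z : ℂ => z ^ (2 * d) *
        (P.eval z / Q.eval z - ∑ k ∈ Finset.range (2 * d), m k * (z⁻¹) ^ (k + 1)))
      (Bornology.cobounded ℂ) (𝓝 0)) :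
    (Matrix.of fun (i : Fin d) (j : Fin (d + 1)) => m ((i : ℕ) + (j : ℕ))).rank = r := by
  rcases Nat.eq_zero_or_pos d with rfl | hd
  · have hr0 : r = 0 := by omega
    have h0 : (Matrix.of fun (i : Fin 0) (j : Fin 1) => m ((i : ℕ) + (j : ℕ))).rank = 0 := by
      refine le_antisymm ?_ (Nat.zero_le _)
      simpa using Matrix.rank_le_card_height (Matrix.of fun (i : Fin 0) (j : Fin 1) => m ((i : ℕ) + (j : ℕ)))
    rw [h0, hr0]
  set g : ℕ → ℂ := gcoef r P Q with hgdef
  have hA := hAg hQ hQdeg hdeg d hd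
  have hmg : ∀ k, k < 2*d → m k = g k := by
    have hdiff : Tendsto (fun z : ℂ =>
        (z ^ (2*d) * (P.eval z / Q.eval z - ∑ k ∈ range (2*d), g k * (z⁻¹) ^ (k+1)))
        - (z ^ (2*d) * (P.eval z / Q.eval z - ∑ k ∈ range (2*d), m k * (z⁻¹) ^ (k+1))))
        (Bornology.cobounded ℂ) (𝓝 0) := by
      simpa using hA.sub htaylor
    have heve : ∀ᶠ z : ℂ in Bornology.cobounded ℂ,
        (z ^ (2*d) * (P.eval z / Q.eval z - ∑ k ∈ range (2*d), g k * (z⁻¹) ^ (k+1)))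
        - (z ^ (2*d) * (P.eval z / Q.eval z - ∑ k ∈ range (2*d), m k * (z⁻¹) ^ (k+1)))
        = ∑ k ∈ range (2*d), (fun k => m k - g k) k * z ^ (2*d - 1 - k) := by
      filter_upwards [eventually_cobounded_le_norm (1:ℝ)] with z hz1
      have hz0 : z ≠ 0 := by
        intro h0; rw [h0] at hz1; simp at hz1; linarith
      have e0 : ∑ k ∈ range (2*d), ((m k - g k) * (z⁻¹) ^ (k+1))
          = (∑ k ∈ range (2*d), m k * (z⁻¹) ^ (k+1))
            - ∑ k ∈ range (2*d), g k * (z⁻¹) ^ (k+1) := by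
        rw [← Finset.sum_sub_distrib]
        exact Finset.sum_congr rfl fun k _ => by ring
      have e1 : (z ^ (2*d) * (P.eval z / Q.eval z - ∑ k ∈ range (2*d), g k * (z⁻¹) ^ (k+1)))
          - (z ^ (2*d) * (P.eval z / Q.eval z - ∑ k ∈ range (2*d), m k * (z⁻¹) ^ (k+1)))
          = ∑ k ∈ range (2*d), z ^ (2*d) * ((m k - g k) * (z⁻¹) ^ (k+1)) := by
        rw [← Finset.mul_sum, e0]
        ring
      rw [e1]
      refine Finset.sum_congr rfl fun k hk => ?_
      rw [Finset.mem_range] at hk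
      have e3 : z ^ (2*d) = z ^ (2*d-1-k) * z ^ (k+1) := by
        rw [← pow_add]; congr 1; omega
      rw [e3, inv_pow]
      field_simp
    have hz := coeffs_eq_zero_of_tendsto (2*d) (fun k => m k - g k) (hdiff.congr' heve)
    intro k hk
    have := hz k hk
    simp only [sub_eq_zero] at this
    exact this
  have hrecm : ∀ k, k + r < 2*d → ∑ t ∈ range (r+1), Q.coeff t * m (k+t) = 0 := by
    intro k hk
    have : ∑ t ∈ range (r+1), Q.coeff t * m (k+t)
        = ∑ t ∈ range (r+1), Q.coeff t * g (k+t) := by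
      refine Finset.sum_congr rfl fun t ht => ?_
      rw [Finset.mem_range] at ht
      rw [hmg (k+t) (by omega)]
    rw [this]
    exact hrec hQ hQdeg hdeg k
  set A := Matrix.of (fun (i : Fin d) (j : Fin (d + 1)) => m ((i : ℕ) + (j : ℕ))) with hAdef
  set fam : Fin r → (Fin d → ℂ) := fun t => fun i : Fin d => m ((i : ℕ) + (t : ℕ)) with hfam
  have hqr : Q.coeff r ≠ 0 := by
    rw [← hQdeg]; exact mt leadingCoeff_eq_zero.mp hQ
  have hub : A.rank ≤ r := by
    rw [Matrix.rank_eq_finrank_span_cols]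
    have hcol : ∀ jj : ℕ, jj ≤ d → (fun i : Fin d => m ((i : ℕ) + jj)) ∈
        Submodule.span ℂ (Set.range fam) := by
      intro jj
      induction jj using Nat.strong_induction_on with
      | _ jj ih =>
        intro hjj
        rcases Nat.lt_or_ge jj r with hjr | hjr
        · have : (fun i : Fin d => m ((i : ℕ) + jj)) = fam ⟨jj, hjr⟩ := rfl
          rw [this]
          exact Submodule.subset_span ⟨⟨jj, hjr⟩, rfl⟩
        · have heq : (fun i : Fin d => m ((i : ℕ) + jj))
              = (-(Q.coeff r)⁻¹) • ∑ t ∈ range r,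
                  Q.coeff t • (fun i : Fin d => m ((i : ℕ) + (jj - r + t))) := by
            funext i
            have hrec' := hrecm ((i : ℕ) + (jj - r)) (by omega)
            rw [Finset.sum_range_succ] at hrec'
            have e2 : (i : ℕ) + (jj - r) + r = (i : ℕ) + jj := by omega
            rw [e2] at hrec'
            have hrec'' : ∑ t ∈ range r, Q.coeff t * m ((i : ℕ) + (jj - r + t))
                + Q.coeff r * m ((i : ℕ) + jj) = 0 := by
              rw [← hrec']
              congr 1
              refine Finset.sum_congr rfl fun t _ => ?_
              have e : (i : ℕ) + (jj - r + t) = (i : ℕ) + (jj - r) + t := by omega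
              rw [e]
            simp only [Pi.smul_apply, Finset.sum_apply, smul_eq_mul]
            field_simp
            linear_combination hrec''
          rw [heq]
          refine Submodule.smul_mem _ _ (Submodule.sum_mem _ fun t ht => Submodule.smul_mem _ _ ?_)
          rw [Finset.mem_range] at ht
          exact ih (jj - r + t) (by omega) (by omega)
    have hsub : Submodule.span ℂ (Set.range A.transpose) ≤ Submodule.span ℂ (Set.range fam) := by
      rw [Submodule.span_le]
      rintro _ ⟨j, rfl⟩
      exact hcol (j : ℕ) (Nat.lt_succ_iff.mp j.isLt)
    calc Module.finrank ℂ (Submodule.span ℂ (Set.range A.transpose))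
        ≤ Module.finrank ℂ (Submodule.span ℂ (Set.range fam)) := Submodule.finrank_mono hsub
      _ ≤ Fintype.card (Fin r) := finrank_range_le_card fam
      _ = r := Fintype.card_fin r
  rcases Nat.eq_zero_or_pos r with hr0 | hr
  · omega
  have hlb : r ≤ A.rank := by
    set N : Matrix (Fin r) (Fin r) ℂ := Matrix.of (fun i j : Fin r => m ((i : ℕ) + (j : ℕ)))
      with hNdef
    have hdet : N.det ≠ 0 := by
      intro hdet0
      obtain ⟨x, hx0, hxv⟩ := Matrix.exists_mulVec_eq_zero_iff.mpr hdet0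
      set v : ℕ → ℂ := fun j => if h : j < r then x ⟨j, h⟩ else 0 with hvdef
      have hv0 : ∀ j, r ≤ j → v j = 0 := fun j hj => dif_neg (by omega)
      have hker : ∀ i, i < r → ∑ j ∈ range r, v j * gcoef r P Q (i+j) = 0 := by
        intro i hi
        have hx := congrFun hxv ⟨i, hi⟩
        simp only [Matrix.mulVec, dotProduct, Pi.zero_apply] at hx
        rw [← hx]
        rw [Finset.sum_range fun j => v j * gcoef r P Q (i+j)]
        refine Finset.sum_congr rfl fun j _ => ?_
        have h1 : v (j : ℕ) = x j := by
          show (if h : (j:ℕ) < r then x ⟨(j:ℕ), h⟩ else 0) = x j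
          rw [dif_pos j.isLt]
        rw [h1, ← hgdef, ← hmg (i + (j : ℕ)) (by omega), mul_comm]
        rfl
      have hvz := kernel_trivial hQ hQdeg hdeg hcop hr v hv0 hker
      apply hx0
      funext j
      have h1 : v (j : ℕ) = x j := by
        show (if h : (j:ℕ) < r then x ⟨(j:ℕ), h⟩ else 0) = x j
        rw [dif_pos j.isLt]
      rw [← h1, hvz]
      rfl
    have hU : IsUnit N := (Matrix.isUnit_iff_isUnit_det N).mpr (isUnit_iff_ne_zero.mpr hdet)
    have hliN : LinearIndependent ℂ (fun j : Fin r => N.transpose j) :=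
      Matrix.linearIndependent_cols_iff_isUnit.mpr hU
    have hliu : LinearIndependent ℂ fam := by
      refine LinearIndependent.of_comp (LinearMap.funLeft ℂ ℂ (Fin.castLE hrd)) ?_
      have hcomp : (LinearMap.funLeft ℂ ℂ (Fin.castLE hrd)) ∘ fam = fun j : Fin r => N.transpose j := by
        funext j
        funext i
        rfl
      rw [hcomp]
      exact hliN
    rw [Matrix.rank_eq_finrank_span_cols]
    have hsub2 : Submodule.span ℂ (Set.range fam) ≤ Submodule.span ℂ (Set.range A.transpose) := by
      rw [Submodule.span_le]
      rintro _ ⟨t, rfl⟩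
      refine Submodule.subset_span ⟨Fin.castLE (by omega) t, ?_⟩
      rfl
    calc r = Fintype.card (Fin r) := (Fintype.card_fin r).symm
      _ = Module.finrank ℂ (Submodule.span ℂ (Set.range fam)) := (finrank_span_eq_card hliu).symm
      _ ≤ Module.finrank ℂ (Submodule.span ℂ (Set.range A.transpose)) := Submodule.finrank_mono hsub2
  omega
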